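/- Let R be a semilocal ring and let M be a finitely generated R-module. Then there exist a finitely presented R-module N and a nonnegative integer n such that M/(M·J(R)) ⊕ N/(N·J(R)) is isomorphic, as an R-module, to the free (R/J(R))-module (R/J(R))ⁿ. -/

import Mathlib

universe u v w

/-- A ring is semilocal if its quotient by the Jacobson radical is a semisimple
(artinian) ring. -/
def IsSemilocalRing (R : Type*) [Ring R] : Prop :=
  IsSemisimpleRing (TwoSidedIdeal.jacobson (⊥ : TwoSidedIdeal R)).ringCon.Quotient

namespace SemilocalAux

variable {R : Type u} [Ring R]

lemma mem_jac_iff {x : R} :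
    x ∈ Ideal.jacobson (⊥ : Ideal R) ↔
      x ∈ TwoSidedIdeal.jacobson (⊥ : TwoSidedIdeal R) := by
  rw [← TwoSidedIdeal.mem_asIdeal, TwoSidedIdeal.asIdeal_jacobson]
  have h : TwoSidedIdeal.asIdeal (⊥ : TwoSidedIdeal R) = ⊥ := by
    ext y
    simp [TwoSidedIdeal.mem_asIdeal, TwoSidedIdeal.mem_bot, Ideal.mem_bot]
  rw [h]

lemma jac_mul_mem_right {x : R} (hx : x ∈ Ideal.jacobson (⊥ : Ideal R)) (y : R) :
    x * y ∈ Ideal.jacobson (⊥ : Ideal R) :=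
  Ideal.mul_mem_right y _ hx

variable (R) in
/-- The canonical semilinear map from the module quotient `R ⧸ J(R)` to the ring
quotient by the two-sided Jacobson radical. -/
noncomputable def toRingQuotient :
    (R ⧸ Ideal.jacobson (⊥ : Ideal R)) →ₛₗ[(TwoSidedIdeal.jacobson (⊥ : TwoSidedIdeal R)).ringCon.mk']
      (TwoSidedIdeal.jacobson (⊥ : TwoSidedIdeal R)).ringCon.Quotient where
  toFun x := Quotient.liftOn' x
    ((TwoSidedIdeal.jacobson (⊥ : TwoSidedIdeal R)).ringCon.mk') (by
      intro a b h
      have hab : a - b ∈ Ideal.jacobson (⊥ : Ideal R) :=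
        (Submodule.quotientRel_def _).mp h
      exact (RingCon.eq _).mpr
        (((TwoSidedIdeal.jacobson (⊥ : TwoSidedIdeal R)).rel_iff a b).mpr
          (mem_jac_iff.mp hab)))
  map_add' := by
    rintro ⟨a⟩ ⟨b⟩
    exact map_add _ a b
  map_smul' := by
    rintro r ⟨a⟩
    exact map_mul ((TwoSidedIdeal.jacobson (⊥ : TwoSidedIdeal R)).ringCon.mk') r a

lemma isSemisimpleModule_quot (hR : IsSemilocalRing R) :
    IsSemisimpleModule R (R ⧸ Ideal.jacobson (⊥ : Ideal R)) := by
  haveI : RingHomSurjective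
      ((TwoSidedIdeal.jacobson (⊥ : TwoSidedIdeal R)).ringCon.mk') :=
    ⟨fun q => Quotient.inductionOn' q fun a => ⟨a, rfl⟩⟩
  haveI : IsSemisimpleRing
      (TwoSidedIdeal.jacobson (⊥ : TwoSidedIdeal R)).ringCon.Quotient := hR
  have hbij : Function.Bijective (toRingQuotient R) := by
    constructor
    · rintro ⟨a⟩ ⟨b⟩ hab
      have h : ((TwoSidedIdeal.jacobson (⊥ : TwoSidedIdeal R)).ringCon.mk' a)
          = ((TwoSidedIdeal.jacobson (⊥ : TwoSidedIdeal R)).ringCon.mk' b) := hab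
      have h2 : a - b ∈ Ideal.jacobson (⊥ : Ideal R) :=
        mem_jac_iff.mpr
          (((TwoSidedIdeal.jacobson (⊥ : TwoSidedIdeal R)).rel_iff a b).mp ((RingCon.eq _).mp h))
      exact Quotient.sound' ((Submodule.quotientRel_def _).mpr h2)
    · intro q
      obtain ⟨a⟩ := q
      exact ⟨Submodule.Quotient.mk a, rfl⟩
  exact ((toRingQuotient R).isSemisimpleModule_iff_of_bijective hbij).mpr inferInstance

/-- The Jacobson radical times the free module is the product of copies of the radical. -/
lemma smul_top_eq_ker (m : ℕ) :
    (Ideal.jacobson (⊥ : Ideal R) • (⊤ : Submodule R (Fin m → R))) =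
      LinearMap.ker (LinearMap.pi fun i =>
        (Ideal.jacobson (⊥ : Ideal R)).mkQ ∘ₗ LinearMap.proj (R := R) (φ := fun _ => R) i) := by
  apply le_antisymm
  · refine Submodule.smul_le.mpr fun r hr f _ => ?_
    rw [LinearMap.mem_ker]
    ext i
    simp only [LinearMap.pi_apply, LinearMap.comp_apply, LinearMap.proj_apply,
      Submodule.mkQ_apply, Pi.zero_apply, Pi.smul_apply, smul_eq_mul]
    exact (Submodule.Quotient.mk_eq_zero _).mpr (jac_mul_mem_right hr (f i))
  · intro f hf
    rw [LinearMap.mem_ker] at hf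
    have hfi : ∀ i, f i ∈ Ideal.jacobson (⊥ : Ideal R) := by
      intro i
      have := congrFun hf i
      simpa only [LinearMap.pi_apply, LinearMap.comp_apply, LinearMap.proj_apply,
        Submodule.mkQ_apply, Pi.zero_apply, Submodule.Quotient.mk_eq_zero] using this
    have hf2 : f = ∑ i : Fin m, (f i) • (Pi.single (M := fun _ : Fin m => R) i (1 : R)) := by
      rw [← Finset.univ_sum_single f]
      refine Finset.sum_congr rfl fun i _ => ?_
      ext j
      rcases eq_or_ne i j with rfl | hij
      · simp
      · simp [Pi.single_eq_of_ne' hij]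
    rw [hf2]
    exact Submodule.sum_mem _ fun i _ =>
      Submodule.smul_mem_smul (hfi i) Submodule.mem_top

variable (R) in
/-- `Rᵐ / J·Rᵐ ≃ (R/J)ᵐ`. -/
noncomputable def piQuotEquiv (m : ℕ) :
    ((Fin m → R) ⧸ (Ideal.jacobson (⊥ : Ideal R) • (⊤ : Submodule R (Fin m → R))))
      ≃ₗ[R] (Fin m → R ⧸ Ideal.jacobson (⊥ : Ideal R)) :=
  (Submodule.quotEquivOfEq _ _ (smul_top_eq_ker m)).trans <|
    LinearMap.quotKerEquivOfSurjective _ (by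
      intro g
      choose a ha using fun i => Submodule.Quotient.mk_surjective _ (g i)
      exact ⟨a, funext fun i => ha i⟩)

lemma isSemisimpleModule_piQuot (hR : IsSemilocalRing R) (m : ℕ) :
    IsSemisimpleModule R
      ((Fin m → R) ⧸ (Ideal.jacobson (⊥ : Ideal R) • (⊤ : Submodule R (Fin m → R)))) := by
  haveI h1 : IsSemisimpleModule R (R ⧸ Ideal.jacobson (⊥ : Ideal R)) :=
    isSemisimpleModule_quot hR
  haveI h2 : IsSemisimpleModule R (Fin m → R ⧸ Ideal.jacobson (⊥ : Ideal R)) := by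
    refine isSemisimpleModule_of_isSemisimpleModule_submodule'
      (p := fun i : Fin m => LinearMap.range
        (LinearMap.single R (fun _ : Fin m => R ⧸ Ideal.jacobson (⊥ : Ideal R)) i))
      (fun i => IsSemisimpleModule.range _) (LinearMap.iSup_range_single R _)
  exact IsSemisimpleModule.congr (piQuotEquiv R m)

/-- Quotient by the image of a submodule under a surjection. -/
noncomputable def quotMapEquiv {A : Type*} {B : Type*} [AddCommGroup A] [Module R A]
    [AddCommGroup B] [Module R B] (p : A →ₗ[R] B) (hp : Function.Surjective p)
    (S : Submodule R A) :
    (B ⧸ S.map p) ≃ₗ[R] A ⧸ (S ⊔ LinearMap.ker p) :=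
  ((LinearMap.quotKerEquivOfSurjective ((S.map p).mkQ ∘ₗ p)
      ((S.map p).mkQ_surjective.comp hp)).symm).trans <|
    Submodule.quotEquivOfEq _ _ (by
      rw [LinearMap.ker_comp, Submodule.ker_mkQ, Submodule.comap_map_eq])

lemma exists_fg_le_map_eq {A : Type*} {B : Type*} [AddCommGroup A] [Module R A]
    [AddCommGroup B] [Module R B] (f : A →ₗ[R] B) (S : Submodule R A)
    (h : (S.map f).FG) :
    ∃ L : Submodule R A, L.FG ∧ L ≤ S ∧ L.map f = S.map f := by
  obtain ⟨s, hs⟩ := h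
  have hsub : (s : Set B) ⊆ S.map f := hs ▸ Submodule.subset_span
  choose g hg1 hg2 using fun x : s => Submodule.mem_map.mp (hsub x.2)
  refine ⟨Submodule.span R (Set.range g), Submodule.fg_span (Set.finite_range g),
    Submodule.span_le.mpr (by rintro _ ⟨x, rfl⟩; exact hg1 x), ?_⟩
  rw [Submodule.map_span, ← hs]
  congr 1
  ext y
  constructor
  · rintro ⟨_, ⟨x, rfl⟩, rfl⟩
    rw [hg2]
    exact x.2
  · intro hy
    exact ⟨g ⟨y, hy⟩, ⟨_, rfl⟩, hg2 _⟩

/-- KEY: for any finitely generated `P` there is a finitely presented `N` with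
`N/NJ ≃ P/PJ`. -/
lemma key (hR : IsSemilocalRing R) (P : Type w) [AddCommGroup P] [Module R P]
    [Module.Finite R P] :
    ∃ (N : Type u) (_ : AddCommGroup N) (_ : Module R N) (_ : Module.FinitePresentation R N),
      Nonempty ((N ⧸ (Ideal.jacobson (⊥ : Ideal R) • (⊤ : Submodule R N))) ≃ₗ[R]
        (P ⧸ (Ideal.jacobson (⊥ : Ideal R) • (⊤ : Submodule R P)))) := by
  classical
  obtain ⟨m, p, hp⟩ := Module.Finite.exists_fin' R P
  set J : Ideal R := Ideal.jacobson (⊥ : Ideal R) with hJ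
  set F := (Fin m → R)
  set G : Submodule R F := J • (⊤ : Submodule R F) with hG
  -- the quotient F/G is a finitely generated semisimple module, hence noetherian
  haveI : IsSemisimpleModule R (F ⧸ G) := isSemisimpleModule_piQuot hR m
  haveI : Module.Finite R (F ⧸ G) := Module.Finite.of_surjective G.mkQ G.mkQ_surjective
  haveI : IsNoetherian R (F ⧸ G) := inferInstance
  -- choose a finitely generated L ≤ ker p with the same image in F/G
  have hKfg : ((LinearMap.ker p).map G.mkQ).FG := IsNoetherian.noetherian _
  obtain ⟨L, hLfg, hLle, hLmap⟩ := exists_fg_le_map_eq G.mkQ (LinearMap.ker p) hKfg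
  have hsup : G ⊔ L = G ⊔ LinearMap.ker p := by
    have h1 := Submodule.comap_map_mkQ G L
    have h2 := Submodule.comap_map_mkQ G (LinearMap.ker p)
    rw [← h1, ← h2, hLmap]
  refine ⟨F ⧸ L, inferInstance, inferInstance, ?_, ?_⟩
  · exact Module.finitePresentation_of_surjective L.mkQ L.mkQ_surjective
      (by rwa [Submodule.ker_mkQ])
  -- now build the isomorphism (F⧸L)/J(F⧸L) ≃ P/JP
  have hNJ : (J • (⊤ : Submodule R (F ⧸ L))) = G.map L.mkQ := by
    rw [hG, Submodule.map_smul'', Submodule.map_top, Submodule.range_mkQ]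
  have hPJ : (J • (⊤ : Submodule R P)) = G.map p := by
    rw [hG, Submodule.map_smul'', Submodule.map_top, LinearMap.range_eq_top.mpr hp]
  exact ⟨(Submodule.quotEquivOfEq _ _ hNJ).trans <|
    (quotMapEquiv L.mkQ L.mkQ_surjective G).trans <|
    (Submodule.quotEquivOfEq _ _ (by rw [Submodule.ker_mkQ, hsup])).trans <|
    ((quotMapEquiv p hp G).symm).trans <|
    Submodule.quotEquivOfEq _ _ hPJ.symm⟩

end SemilocalAux

open SemilocalAux in
/-- Let `R` be a semilocal ring and `M` a finitely generated `R`-module. Then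
there exist a finitely presented `R`-module `N` and `n ≥ 0` such that
`M/(M·J(R)) ⊕ N/(N·J(R))` is isomorphic, as an `R`-module, to the free `R/J(R)`-module
`(R/J(R))ⁿ`. -/
theorem exists_finitePresentation_quotient_jacobson_free {R : Type u} {M : Type v} [Ring R]
    (hR : IsSemilocalRing R) [AddCommGroup M] [Module R M] [Module.Finite R M] :
    ∃ (N : Type u) (_ : AddCommGroup N) (_ : Module R N) (_ : Module.FinitePresentation R N)
      (n : ℕ),
      Nonempty (((M ⧸ (Ideal.jacobson (⊥ : Ideal R) • (⊤ : Submodule R M))) ×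
          (N ⧸ (Ideal.jacobson (⊥ : Ideal R) • (⊤ : Submodule R N)))) ≃ₗ[R]
        (Fin n → R ⧸ Ideal.jacobson (⊥ : Ideal R))) := by
  classical
  obtain ⟨n, p, hp⟩ := Module.Finite.exists_fin' R M
  set J : Ideal R := Ideal.jacobson (⊥ : Ideal R) with hJ
  set F := (Fin n → R)
  set G : Submodule R F := J • (⊤ : Submodule R F) with hG
  haveI : IsSemisimpleModule R (F ⧸ G) := isSemisimpleModule_piQuot hR n
  haveI : Module.Finite R (F ⧸ G) := Module.Finite.of_surjective G.mkQ G.mkQ_surjective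
  haveI : IsNoetherian R (F ⧸ G) := inferInstance
  set Kbar : Submodule R (F ⧸ G) := (LinearMap.ker p).map G.mkQ with hKbar
  -- complement of Kbar in the semisimple module F/G
  obtain ⟨c, hc⟩ := exists_isCompl Kbar
  -- M / JM ≃ c
  have hMJ : (J • (⊤ : Submodule R M)) = G.map p := by
    rw [hG, Submodule.map_smul'', Submodule.map_top, LinearMap.range_eq_top.mpr hp]
  have eM : (M ⧸ (J • (⊤ : Submodule R M))) ≃ₗ[R] c :=
    (Submodule.quotEquivOfEq _ _ hMJ).trans <|
      (quotMapEquiv p hp G).trans <|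
      (Submodule.quotEquivOfEq _ _ (by rw [Submodule.ker_mkQ, sup_comm])).trans <|
      ((quotMapEquiv G.mkQ G.mkQ_surjective (LinearMap.ker p)).symm).trans <|
      Kbar.quotientEquivOfIsCompl c hc
  -- Kbar is a finitely generated module killed by J
  haveI : Module.Finite R Kbar := Module.Finite.iff_fg.mpr (IsNoetherian.noetherian _)
  have hQJ : (J • (⊤ : Submodule R (F ⧸ G))) = ⊥ := by
    have : (J • (⊤ : Submodule R (F ⧸ G))) = G.map G.mkQ := by
      rw [hG, Submodule.map_smul'', Submodule.map_top, Submodule.range_mkQ]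
    rw [this, eq_bot_iff]
    rintro _ ⟨y, hy, rfl⟩
    simpa using (Submodule.Quotient.mk_eq_zero G).mpr hy
  have hKJ : (J • (⊤ : Submodule R Kbar)) = ⊥ := by
    rw [eq_bot_iff]
    refine Submodule.smul_le.mpr fun r hr x _ => ?_
    rw [Submodule.mem_bot]
    have hx : r • (x : F ⧸ G) ∈ J • (⊤ : Submodule R (F ⧸ G)) :=
      Submodule.smul_mem_smul hr Submodule.mem_top
    rw [hQJ, Submodule.mem_bot] at hx
    exact Subtype.ext (by simpa using hx)
  obtain ⟨N, instN1, instN2, instN3, ⟨eN⟩⟩ := key hR Kbar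
  refine ⟨N, instN1, instN2, instN3, n, ⟨?_⟩⟩
  exact (LinearEquiv.prodCongr eM
      (eN.trans ((Submodule.quotEquivOfEq _ _ hKJ).trans
        (Submodule.quotEquivOfEqBot _ rfl)))).trans <|
    (LinearEquiv.prodComm R _ _).trans <|
    (Submodule.prodEquivOfIsCompl Kbar c hc).trans <|
    piQuotEquiv R n
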